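/- Let α, β, θ > 0 and λ₁, λ₂ ∈ [−1,1]. Let g : ℝ → ℝ restrict to a continuous strictly increasing bijection of [0,∞) onto [0,∞) with g(0) = 0 and g(x) → ∞ as x → ∞, differentiable on (0,∞) with derivative g′. Let X₁ ∼ GTLD(α,β,θ,λ₁;g) with density f₁ and X₂ ∼ GTLD(α,β,θ,λ₂;g) with CDF F₂. Then the stress–strength reliability satisfies R = ∫₀^∞ f₁(x) F₂(x) dx = (λ₂ − λ₁ + 3)/6. -/

import Mathlib

open Real MeasureTheory Filter

/-- Stress–strength reliability of the GTLD: if `X₁ ∼ GTLD(α,β,θ,λ₁;g)` with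
density `f₁` and `X₂ ∼ GTLD(α,β,θ,λ₂;g)` with CDF `F₂`, then
`R = ∫₀^∞ f₁(x) F₂(x) dx = (λ₂ − λ₁ + 3)/6`. -/
theorem gtld_stress_strength (α β θ lam1 lam2 : ℝ) (g g' : ℝ → ℝ)
    (hα : 0 < α) (hβ : 0 < β) (hθ : 0 < θ)
    (hlam1 : lam1 ∈ Set.Icc (-1 : ℝ) 1) (hlam2 : lam2 ∈ Set.Icc (-1 : ℝ) 1)
    (hg_mono : StrictMonoOn g (Set.Ici 0))
    (hg_cont : ContinuousOn g (Set.Ici 0))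
    (hg_bij : Set.BijOn g (Set.Ici 0) (Set.Ici 0))
    (hg0 : g 0 = 0)
    (hg_top : Tendsto g atTop atTop)
    (hg_deriv : ∀ x ∈ Set.Ioi (0 : ℝ), HasDerivAt g (g' x) x) :
    ∫ x in Set.Ioi (0 : ℝ),
        (θ * α * β * g x ^ (α - 1) * g' x * Real.exp (-β * g x ^ α) *
          (1 - Real.exp (-β * g x ^ α)) ^ (θ - 1) *
          (1 + lam1 - 2 * lam1 * (1 - Real.exp (-β * g x ^ α)) ^ θ)) *
        ((1 + lam2) * (1 - Real.exp (-β * g x ^ α)) ^ θ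
          - lam2 * (1 - Real.exp (-β * g x ^ α)) ^ (2 * θ)) =
      (lam2 - lam1 + 3) / 6 := by
  obtain ⟨hl1a, hl1b⟩ := hlam1
  obtain ⟨hl2a, hl2b⟩ := hlam2
  -- nonnegativity of g'
  have hg'nn : ∀ x ∈ Set.Ioi (0 : ℝ), 0 ≤ g' x := by
    intro x hx
    have h := hasDerivAt_iff_tendsto_slope.mp (hg_deriv x hx)
    have hsub : Set.Ioi x ⊆ {x}ᶜ := fun y hy => ne_of_gt hy
    have hs : Tendsto (slope g x) (nhdsWithin x (Set.Ioi x)) (nhds (g' x)) :=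
      h.mono_left (nhdsWithin_mono x hsub)
    refine ge_of_tendsto hs ?_
    filter_upwards [self_mem_nhdsWithin] with y hy
    have hxy : x < y := hy
    have hgxy : g x < g y :=
      hg_mono (Set.mem_Ici.2 (le_of_lt hx)) (Set.mem_Ici.2 (le_of_lt (lt_trans hx hxy))) hxy
    have : slope g x y = (g y - g x) / (y - x) := slope_def_field g x y
    rw [this]
    exact le_of_lt (div_pos (sub_pos.2 hgxy) (sub_pos.2 hxy))
  have hgpos : ∀ x ∈ Set.Ioi (0 : ℝ), 0 < g x := by
    intro x hx
    have := hg_mono Set.self_mem_Ici (Set.mem_Ici.2 (le_of_lt hx)) hx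
    rwa [hg0] at this
  set t : ℝ → ℝ := fun x => 1 - Real.exp (-β * g x ^ α) with ht_def
  have htpos : ∀ x ∈ Set.Ioi (0 : ℝ), 0 < t x := by
    intro x hx
    have h1 : 0 < β * g x ^ α := mul_pos hβ (Real.rpow_pos_of_pos (hgpos x hx) α)
    have : Real.exp (-β * g x ^ α) < 1 := by
      rw [Real.exp_lt_one_iff]; linarith
    simp only [ht_def]; linarith
  have htlt1 : ∀ x, t x < 1 := by
    intro x
    have : 0 < Real.exp (-β * g x ^ α) := Real.exp_pos _
    simp only [ht_def]; linarith
  set a : ℝ := (1 + lam1) * (1 + lam2) / 2 with ha_def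
  set b : ℝ := -((1 + lam1) * lam2 + 2 * lam1 * (1 + lam2)) / 3 with hb_def
  set c : ℝ := 2 * lam1 * lam2 / 4 with hc_def
  set Q : ℝ → ℝ := fun u => a * u ^ 2 + b * u ^ 3 + c * u ^ 4 with hQ_def
  set F : ℝ → ℝ := fun x => Q (t x ^ θ) with hF_def
  have hQder : ∀ u : ℝ, HasDerivAt Q (a * (2 * u) + b * (3 * u ^ 2) + c * (4 * u ^ 3)) u := by
    intro u
    have h2 : HasDerivAt (fun v : ℝ => a * v ^ 2) (a * (2 * u)) u := by
      simpa using (hasDerivAt_pow 2 u).const_mul a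
    have h3 : HasDerivAt (fun v : ℝ => b * v ^ 3) (b * (3 * u ^ 2)) u := by
      simpa using (hasDerivAt_pow 3 u).const_mul b
    have h4 : HasDerivAt (fun v : ℝ => c * v ^ 4) (c * (4 * u ^ 3)) u := by
      simpa using (hasDerivAt_pow 4 u).const_mul c
    exact (h2.add h3).add h4
  have key : ∀ x ∈ Set.Ioi (0 : ℝ), HasDerivAt F
      ((θ * α * β * g x ^ (α - 1) * g' x * Real.exp (-β * g x ^ α) *
          (1 - Real.exp (-β * g x ^ α)) ^ (θ - 1) *
          (1 + lam1 - 2 * lam1 * (1 - Real.exp (-β * g x ^ α)) ^ θ)) *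
        ((1 + lam2) * (1 - Real.exp (-β * g x ^ α)) ^ θ
          - lam2 * (1 - Real.exp (-β * g x ^ α)) ^ (2 * θ))) x := by
    intro x hx
    have hgx := hgpos x hx
    have htx := htpos x hx
    have h1 : HasDerivAt (fun y => g y ^ α) (α * g x ^ (α - 1) * g' x) x := by
      have := (Real.hasDerivAt_rpow_const (p := α) (Or.inl hgx.ne')).comp x (hg_deriv x hx)
      simpa [mul_assoc, Function.comp_def] using this
    have h2 : HasDerivAt (fun y => Real.exp (-β * g y ^ α))
        (Real.exp (-β * g x ^ α) * (-β * (α * g x ^ (α - 1) * g' x))) x :=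
      (h1.const_mul (-β)).exp
    have h3 : HasDerivAt t (-(Real.exp (-β * g x ^ α) * (-β * (α * g x ^ (α - 1) * g' x)))) x :=
      h2.const_sub 1
    have h4 : HasDerivAt (fun y => t y ^ θ)
        (θ * t x ^ (θ - 1) * (-(Real.exp (-β * g x ^ α) * (-β * (α * g x ^ (α - 1) * g' x))))) x := by
      have := (Real.hasDerivAt_rpow_const (p := θ) (Or.inl htx.ne')).comp x h3
      simpa [mul_assoc, Function.comp_def] using this
    have h5 := (hQder (t x ^ θ)).comp x h4
    have h2θ : t x ^ (2 * θ) = t x ^ θ * t x ^ θ := by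
      rw [two_mul, Real.rpow_add htx]
    refine h5.congr_deriv ?_
    simp only [ht_def] at h2θ ⊢
    rw [h2θ]
    simp only [ha_def, hb_def, hc_def]
    ring
  -- nonnegativity of integrand
  have hnn : ∀ x ∈ Set.Ioi (0 : ℝ),
      0 ≤ (θ * α * β * g x ^ (α - 1) * g' x * Real.exp (-β * g x ^ α) *
          (1 - Real.exp (-β * g x ^ α)) ^ (θ - 1) *
          (1 + lam1 - 2 * lam1 * (1 - Real.exp (-β * g x ^ α)) ^ θ)) *
        ((1 + lam2) * (1 - Real.exp (-β * g x ^ α)) ^ θ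
          - lam2 * (1 - Real.exp (-β * g x ^ α)) ^ (2 * θ)) := by
    intro x hx
    have hgx := hgpos x hx
    have htx := htpos x hx
    have hupos : 0 < t x ^ θ := Real.rpow_pos_of_pos htx θ
    have hult1 : t x ^ θ < 1 := Real.rpow_lt_one htx.le (htlt1 x) hθ
    have h2θ : t x ^ (2 * θ) = t x ^ θ * t x ^ θ := by
      rw [two_mul, Real.rpow_add htx]
    have hbr1 : 0 ≤ 1 + lam1 - 2 * lam1 * t x ^ θ := by nlinarith
    have hbr2 : 0 ≤ (1 + lam2) * t x ^ θ - lam2 * t x ^ (2 * θ) := by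
      rw [h2θ]
      nlinarith [mul_nonneg (by linarith : (0:ℝ) ≤ 1 + lam2)
        (mul_nonneg hupos.le (by linarith : (0:ℝ) ≤ 1 - t x ^ θ)),
        sq_nonneg (t x ^ θ)]
    have hA : 0 ≤ θ * α * β * g x ^ (α - 1) * g' x * Real.exp (-β * g x ^ α) *
        (1 - Real.exp (-β * g x ^ α)) ^ (θ - 1) := by
      have h1 : (0:ℝ) ≤ θ * α * β := by positivity
      have h2 : (0:ℝ) ≤ g x ^ (α - 1) := (Real.rpow_pos_of_pos hgx _).le
      have h3 : (0:ℝ) ≤ Real.exp (-β * g x ^ α) := (Real.exp_pos _).le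
      have h4 : (0:ℝ) ≤ (1 - Real.exp (-β * g x ^ α)) ^ (θ - 1) := by
        have := Real.rpow_pos_of_pos htx (θ - 1)
        simpa [ht_def] using this.le
      exact mul_nonneg (mul_nonneg (mul_nonneg (mul_nonneg h1 h2) (hg'nn x hx)) h3) h4
    have hbr1' : 0 ≤ 1 + lam1 - 2 * lam1 * (1 - Real.exp (-β * g x ^ α)) ^ θ := by
      simpa [ht_def] using hbr1
    have hbr2' : 0 ≤ (1 + lam2) * (1 - Real.exp (-β * g x ^ α)) ^ θ
        - lam2 * (1 - Real.exp (-β * g x ^ α)) ^ (2 * θ) := by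
      simpa [ht_def] using hbr2
    exact mul_nonneg (mul_nonneg hA hbr1') hbr2'
  -- continuity at 0 within Ici 0
  have hFcont : ContinuousWithinAt F (Set.Ici 0) 0 := by
    have hg0' : ContinuousWithinAt g (Set.Ici 0) 0 := hg_cont 0 Set.self_mem_Ici
    have h1 : ContinuousWithinAt (fun y => g y ^ α) (Set.Ici 0) 0 := by
      have : ContinuousAt (fun z : ℝ => z ^ α) (g 0) := by
        rw [hg0]; exact Real.continuousAt_rpow_const 0 α (Or.inr hα.le)
      exact this.comp_continuousWithinAt hg0'
    have h2 : ContinuousWithinAt t (Set.Ici 0) 0 :=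
      continuousWithinAt_const.sub ((Real.continuous_exp.continuousAt).comp_continuousWithinAt
        (continuousWithinAt_const.mul h1))
    have ht0 : t 0 = 0 := by
      simp [ht_def, hg0, Real.zero_rpow hα.ne']
    have h3 : ContinuousWithinAt (fun y => t y ^ θ) (Set.Ici 0) 0 := by
      have : ContinuousAt (fun z : ℝ => z ^ θ) (t 0) := by
        rw [ht0]; exact Real.continuousAt_rpow_const 0 θ (Or.inr hθ.le)
      exact this.comp_continuousWithinAt h2
    have hQc : Continuous Q := by
      rw [hQ_def]
      exact ((continuous_const.mul (continuous_pow 2)).add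
        (continuous_const.mul (continuous_pow 3))).add (continuous_const.mul (continuous_pow 4))
    exact hQc.continuousAt.comp_continuousWithinAt h3
  -- limit at infinity
  have hlim : Tendsto F atTop (nhds (Q 1)) := by
    have h0 : Tendsto (fun x => β * g x ^ α) atTop atTop :=
      ((tendsto_rpow_atTop hα).comp hg_top).const_mul_atTop hβ
    have h1 : Tendsto (fun x => Real.exp (-β * g x ^ α)) atTop (nhds 0) := by
      have := Real.tendsto_exp_atBot.comp (tendsto_neg_atTop_atBot.comp h0)
      simpa [Function.comp_def, neg_mul] using this
    have h2 : Tendsto t atTop (nhds 1) := by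
      have := (tendsto_const_nhds (x := (1:ℝ)) (f := atTop)).sub h1
      simpa [ht_def] using this
    have h3 : Tendsto (fun x => t x ^ θ) atTop (nhds 1) := by
      have hc : ContinuousAt (fun z : ℝ => z ^ θ) 1 :=
        Real.continuousAt_rpow_const 1 θ (Or.inl one_ne_zero)
      have := hc.tendsto.comp h2
      simpa [Real.one_rpow, Function.comp_def] using this
    have hQc : Continuous Q := by
      rw [hQ_def]
      exact ((continuous_const.mul (continuous_pow 2)).add
        (continuous_const.mul (continuous_pow 3))).add (continuous_const.mul (continuous_pow 4))
    exact hQc.continuousAt.tendsto.comp h3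
  have hF0 : F 0 = 0 := by
    have ht0 : t 0 = 0 := by
      simp [ht_def, hg0, Real.zero_rpow hα.ne']
    simp [hF_def, ht0, Real.zero_rpow hθ.ne', hQ_def]
  rw [MeasureTheory.integral_Ioi_of_hasDerivAt_of_nonneg hFcont key hnn hlim, hF0]
  simp only [hQ_def, ha_def, hb_def, hc_def]
  ring
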